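/- Let f(x) = Q(x) + Bx + c be a quadratic vector field on ℝⁿ and let Φ(x,ε) denote the Kahan map x̃ = x + 2ε(I - εf'(x))^{-1} f(x). Then Φ is reversible: Φ(Φ(x,ε), -ε) = x, whenever the relevant matrices I - εf'(x) and I + εf'(Φ(x,ε)) are invertible. -/

import Mathlib

/-- The Jacobian matrix `f'(x)` of a map `f : ℝⁿ → ℝⁿ` in standard coordinates. -/
noncomputable def jacobian {n : ℕ} (f : (Fin n → ℝ) → (Fin n → ℝ)) (x : Fin n → ℝ) :
    Matrix (Fin n) (Fin n) ℝ :=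
  Matrix.of fun i j => fderiv ℝ f x (Pi.single j 1) i

/-- The Kahan map `Φ(x,ε) = x + 2ε (I - ε f'(x))⁻¹ f(x)`. -/
noncomputable def kahanMap {n : ℕ} (f : (Fin n → ℝ) → (Fin n → ℝ)) (x : Fin n → ℝ)
    (ε : ℝ) : Fin n → ℝ :=
  x + (2 * ε) • (1 - ε • jacobian f x)⁻¹.mulVec (f x)

open Finset Matrix in
/-- The explicit Jacobian matrix of the quadratic vector field determined by `A` and `B`. -/
noncomputable def Jmat {n : ℕ} (A : Fin n → Matrix (Fin n) (Fin n) ℝ)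
    (B : Matrix (Fin n) (Fin n) ℝ) (x : Fin n → ℝ) : Matrix (Fin n) (Fin n) ℝ :=
  Matrix.of fun i j => B i j + ∑ k, (A i j k + A i k j) * x k

open Finset Matrix in
lemma quad_hasFDerivAt {n : ℕ} (A : Fin n → Matrix (Fin n) (Fin n) ℝ)
    (B : Matrix (Fin n) (Fin n) ℝ) (c : Fin n → ℝ) (x : Fin n → ℝ) :
    HasFDerivAt (fun y : Fin n → ℝ => (fun i => y ⬝ᵥ (A i) *ᵥ y) + B *ᵥ y + c)
      (LinearMap.toContinuousLinearMap (Matrix.mulVecLin (Jmat A B x))) x := by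
  apply hasFDerivAt_pi''
  intro i
  have hfun : (fun y : Fin n → ℝ => ((fun i => y ⬝ᵥ (A i) *ᵥ y) + B *ᵥ y + c) i)
      = fun y : Fin n → ℝ => (∑ j, ∑ k, A i j k * (y j * y k)) + ((∑ j, B i j * y j) + c i) := by
    funext y
    simp only [Pi.add_apply, dotProduct, Matrix.mulVec]
    rw [add_assoc]
    congr 1
    rw [Finset.sum_congr rfl (fun j _ => Finset.mul_sum (a := y j)
      (f := fun k => A i j k * y k) (s := Finset.univ))]
    exact Finset.sum_congr rfl fun j _ => Finset.sum_congr rfl fun k _ => by ring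
  rw [hfun]
  have hbase : ∀ (j k : Fin n), HasFDerivAt (fun y : Fin n → ℝ => y j * y k)
      (x j • (ContinuousLinearMap.proj k : (Fin n → ℝ) →L[ℝ] ℝ)
        + x k • (ContinuousLinearMap.proj j : (Fin n → ℝ) →L[ℝ] ℝ)) x :=
    fun j k => (hasFDerivAt_apply j x).mul (hasFDerivAt_apply k x)
  have hD : HasFDerivAt
      (fun y : Fin n → ℝ => (∑ j, ∑ k, A i j k * (y j * y k)) + ((∑ j, B i j * y j) + c i))
      ((∑ j, ∑ k, A i j k • (x j • (ContinuousLinearMap.proj k : (Fin n → ℝ) →L[ℝ] ℝ)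
          + x k • (ContinuousLinearMap.proj j : (Fin n → ℝ) →L[ℝ] ℝ)))
        + ((∑ j, B i j • (ContinuousLinearMap.proj j : (Fin n → ℝ) →L[ℝ] ℝ)) + 0)) x := by
    apply HasFDerivAt.add
    · exact HasFDerivAt.fun_sum fun j _ => HasFDerivAt.fun_sum fun k _ => (hbase j k).const_mul _
    · exact HasFDerivAt.add
        (HasFDerivAt.fun_sum fun j _ => (hasFDerivAt_apply j x).const_mul _)
        (hasFDerivAt_const _ _)
  refine hD.congr_fderiv ?_
  ext v
  simp only [ContinuousLinearMap.add_apply, ContinuousLinearMap.coe_sum', Finset.sum_apply,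
    ContinuousLinearMap.coe_smul', Pi.smul_apply, ContinuousLinearMap.proj_apply,
    ContinuousLinearMap.zero_apply, ContinuousLinearMap.coe_comp', Function.comp_apply,
    LinearMap.coe_toContinuousLinearMap', Matrix.mulVecLin_apply, smul_eq_mul, add_zero,
    Matrix.mulVec, dotProduct, Jmat, Matrix.of_apply]
  have e1 : ∀ j, ∑ k, A i j k * (x j * v k + x k * v j)
      = (∑ k, A i j k * (x j * v k)) + ∑ k, A i j k * (x k * v j) := by
    intro j
    rw [← Finset.sum_add_distrib]
    exact Finset.sum_congr rfl fun k _ => by ring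
  have e2 : ∀ j, (B i j + ∑ k, (A i j k + A i k j) * x k) * v j
      = B i j * v j + ((∑ k, A i j k * (x k * v j)) + ∑ k, A i k j * (x k * v j)) := by
    intro j
    rw [add_mul, Finset.sum_mul, ← Finset.sum_add_distrib]
    congr 1
    exact Finset.sum_congr rfl fun k _ => by ring
  rw [Finset.sum_congr rfl fun j _ => e1 j, Finset.sum_add_distrib,
    Finset.sum_congr rfl fun j _ => e2 j, Finset.sum_add_distrib, Finset.sum_add_distrib]
  have swap : (∑ j, ∑ k, A i j k * (x j * v k)) = ∑ j, ∑ k, A i k j * (x k * v j) :=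
    Finset.sum_comm
  rw [swap]
  ring

open Finset Matrix in
lemma polar {n : ℕ} (A : Fin n → Matrix (Fin n) (Fin n) ℝ)
    (B : Matrix (Fin n) (Fin n) ℝ) (c : Fin n → ℝ) (a b : Fin n → ℝ) :
    (Jmat A B a + Jmat A B b) *ᵥ (a - b)
      = (2:ℝ) • (((fun i => a ⬝ᵥ (A i) *ᵥ a) + B *ᵥ a + c)
          - ((fun i => b ⬝ᵥ (A i) *ᵥ b) + B *ᵥ b + c)) := by
  funext i
  simp only [Matrix.mulVec, dotProduct, Matrix.add_apply, Jmat, Matrix.of_apply,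
    Pi.smul_apply, Pi.sub_apply, Pi.add_apply, smul_eq_mul]
  have hv : ∀ v : Fin n → ℝ, ∑ j, v j * ∑ k, A i j k * v k = ∑ j, ∑ k, A i j k * (v j * v k) := by
    intro v
    exact Finset.sum_congr rfl fun j _ => by
      rw [Finset.mul_sum]; exact Finset.sum_congr rfl fun k _ => by ring
  rw [hv a, hv b]
  have comb : ∀ j, (∑ k, (A i j k + A i k j) * a k) + (∑ k, (A i j k + A i k j) * b k)
      = ∑ k, (A i j k + A i k j) * (a k + b k) := by
    intro j; rw [← Finset.sum_add_distrib]; exact Finset.sum_congr rfl fun k _ => by ring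
  have e1 : ∀ j ∈ Finset.univ, (B i j + ∑ k, (A i j k + A i k j) * a k
        + (B i j + ∑ k, (A i j k + A i k j) * b k)) * (a j - b j)
      = 2 * (B i j * (a j - b j))
        + ((∑ k, A i j k * ((a k + b k) * (a j - b j)))
          + ∑ k, A i k j * ((a k + b k) * (a j - b j))) := by
    intro j _
    have h0 : B i j + ∑ k, (A i j k + A i k j) * a k + (B i j + ∑ k, (A i j k + A i k j) * b k)
        = 2 * B i j + ∑ k, (A i j k + A i k j) * (a k + b k) := by
      rw [← comb j]; ring
    rw [h0, add_mul, Finset.sum_mul, ← Finset.sum_add_distrib]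
    congr 1
    · ring
    · exact Finset.sum_congr rfl fun k _ => by ring
  rw [Finset.sum_congr rfl e1, Finset.sum_add_distrib, Finset.sum_add_distrib]
  have swap : ∑ j, ∑ k, A i k j * ((a k + b k) * (a j - b j))
      = ∑ j, ∑ k, A i j k * ((a j + b j) * (a k - b k)) := Finset.sum_comm
  rw [swap]
  have comb2 : (∑ j, ∑ k, A i j k * ((a k + b k) * (a j - b j)))
        + ∑ j, ∑ k, A i j k * ((a j + b j) * (a k - b k))
      = ∑ j, ∑ k, (2 * (A i j k * (a j * a k)) - 2 * (A i j k * (b j * b k))) := by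
    rw [← Finset.sum_add_distrib]
    exact Finset.sum_congr rfl fun j _ => by
      rw [← Finset.sum_add_distrib]; exact Finset.sum_congr rfl fun k _ => by ring
  rw [comb2]
  have pull : ∀ (g : Fin n → Fin n → ℝ), ∑ j, ∑ k, 2 * g j k = 2 * ∑ j, ∑ k, g j k := by
    intro g
    rw [Finset.mul_sum]
    exact Finset.sum_congr rfl fun j _ => (Finset.mul_sum _ _ _).symm
  have split : ∑ j, ∑ k, (2 * (A i j k * (a j * a k)) - 2 * (A i j k * (b j * b k)))
      = 2 * (∑ j, ∑ k, A i j k * (a j * a k)) - 2 * (∑ j, ∑ k, A i j k * (b j * b k)) := by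
    rw [Finset.sum_congr rfl fun j _ => Finset.sum_sub_distrib _ _, Finset.sum_sub_distrib,
      pull, pull]
  rw [split]
  have splitB : ∑ j, 2 * (B i j * (a j - b j))
      = 2 * (∑ j, B i j * a j) - 2 * ∑ j, B i j * b j := by
    rw [Finset.sum_congr rfl fun j (_ : j ∈ Finset.univ) =>
      (by ring : 2 * (B i j * (a j - b j)) = 2 * (B i j * a j) - 2 * (B i j * b j)),
      Finset.sum_sub_distrib, ← Finset.mul_sum, ← Finset.mul_sum]
  rw [splitB]
  ring

open Finset Matrix in
lemma jac_eq {n : ℕ} (A : Fin n → Matrix (Fin n) (Fin n) ℝ)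
    (B : Matrix (Fin n) (Fin n) ℝ) (c : Fin n → ℝ)
    (f : (Fin n → ℝ) → (Fin n → ℝ))
    (hfe : f = fun y : Fin n → ℝ => (fun i => y ⬝ᵥ (A i) *ᵥ y) + B *ᵥ y + c)
    (x : Fin n → ℝ) : jacobian f x = Jmat A B x := by
  funext i j
  simp only [jacobian, Matrix.of_apply]
  rw [hfe, (quad_hasFDerivAt A B c x).fderiv]
  simp [Matrix.mulVecLin_apply, Matrix.mulVec_single]

open Finset Matrix in
/-- reversibility of the Kahan map: for a quadratic vector field
`f(x) = Q(x) + Bx + c`, the Kahan map satisfies `Φ(Φ(x,ε), -ε) = x` whenever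
`I - ε f'(x)` and `I + ε f'(Φ(x,ε))` are invertible. -/
theorem kahan_reversible {n : ℕ}
    (Q : (Fin n → ℝ) → (Fin n → ℝ)) (B : Matrix (Fin n) (Fin n) ℝ) (c : Fin n → ℝ)
    (hQ : ∃ A : Fin n → Matrix (Fin n) (Fin n) ℝ,
      ∀ x i, Q x i = dotProduct x ((A i).mulVec x))
    (f : (Fin n → ℝ) → (Fin n → ℝ)) (hf : ∀ x, f x = Q x + B.mulVec x + c)
    (ε : ℝ) (x : Fin n → ℝ)
    (hinv₁ : IsUnit (1 - ε • jacobian f x))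
    (hinv₂ : IsUnit (1 + ε • jacobian f (kahanMap f x ε))) :
    kahanMap f (kahanMap f x ε) (-ε) = x := by
  obtain ⟨A, hA⟩ := hQ
  have hfe : f = fun y : Fin n → ℝ => (fun i => y ⬝ᵥ (A i) *ᵥ y) + B *ᵥ y + c := by
    funext y
    rw [hf y]
    congr 1
    congr 1
    funext i
    exact hA y i
  have hjac : ∀ y, jacobian f y = Jmat A B y := jac_eq A B c f hfe
  set x' := kahanMap f x ε with hx'
  set M : Matrix (Fin n) (Fin n) ℝ := 1 - ε • Jmat A B x with hM
  set N : Matrix (Fin n) (Fin n) ℝ := 1 + ε • Jmat A B x' with hN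
  have hdet1 : IsUnit M.det := by
    rw [← Matrix.isUnit_iff_isUnit_det, hM, ← hjac x]; exact hinv₁
  have hdet2 : IsUnit N.det := by
    rw [← Matrix.isUnit_iff_isUnit_det, hN, ← hjac x']; exact hinv₂
  have hd : x' - x = (2 * ε) • (M⁻¹ *ᵥ f x) := by
    rw [hx', kahanMap, hjac x, ← hM, add_sub_cancel_left]
  have key1 : M *ᵥ (x' - x) = (2 * ε) • f x := by
    rw [hd, Matrix.mulVec_smul, Matrix.mulVec_mulVec, Matrix.mul_nonsing_inv _ hdet1,
      Matrix.one_mulVec]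
  have hpolar := polar A B c x' x
  have key2 : N *ᵥ (x - x') = (-(2 * ε)) • f x' := by
    have h1 : (x' - x) - ε • (Jmat A B x *ᵥ (x' - x)) = (2 * ε) • f x := by
      rw [← key1, hM, Matrix.sub_mulVec, Matrix.one_mulVec, Matrix.smul_mulVec]
    have hp : Jmat A B x' *ᵥ (x' - x) + Jmat A B x *ᵥ (x' - x)
        = (2:ℝ) • (f x' - f x) := by
      have hfx : ∀ y, f y = (fun i => y ⬝ᵥ A i *ᵥ y) + B *ᵥ y + c := fun y => by rw [hfe]
      rw [← Matrix.add_mulVec, hpolar, ← hfx x', ← hfx x]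
    rw [hN, Matrix.add_mulVec, Matrix.one_mulVec, Matrix.smul_mulVec]
    funext i
    have h1i := congrFun h1 i
    have hpi := congrFun hp i
    have hgoal : ∀ v : Fin n → ℝ, (Jmat A B x' *ᵥ (x - x')) i = -((Jmat A B x' *ᵥ (x' - x)) i) := by
      intro v
      have : x - x' = -(x' - x) := (neg_sub x' x).symm
      rw [this, Matrix.mulVec_neg, Pi.neg_apply]
    simp only [Pi.add_apply, Pi.sub_apply, Pi.smul_apply, Pi.neg_apply, smul_eq_mul] at h1i hpi ⊢
    rw [show (Jmat A B x' *ᵥ (x - x')) i = -((Jmat A B x' *ᵥ (x' - x)) i) from hgoal 0]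
    linear_combination (-1 : ℝ) * h1i - ε * hpi
  have hNfix : (1 : Matrix (Fin n) (Fin n) ℝ) - (-ε) • Jmat A B x' = N := by
    rw [hN, neg_smul, sub_neg_eq_add]
  rw [kahanMap, hjac x', hNfix]
  have : (2 * -ε) • (N⁻¹ *ᵥ f x') = x - x' := by
    rw [← Matrix.mulVec_smul]
    have : (2 * -ε) • f x' = N *ᵥ (x - x') := by rw [key2]; congr 1; ring
    rw [this, Matrix.mulVec_mulVec, Matrix.nonsing_inv_mul _ hdet2, Matrix.one_mulVec]
  rw [this]
  abel
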